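/- Let F: ℝ^d → ℝ be differentiable and let h_{k+1} be a minimizer of G(z) = (1/s)‖z - h_k‖² - (1/(4s))‖z - h_{k-1}‖² + F(z). Then F(h_{k+1}) + (1/(4s))‖h_{k+1} - h_k‖² ≤ F(h_k) + (1/(4s))‖h_k - h_{k-1}‖². -/
import Mathlib

/-- Energy stability of the proximal BDF2 scheme: the modified energy
`F(h_k) + (1/(4s))‖h_k - h_{k-1}‖²` is non-increasing. -/
theorem stmt_11 (d : ℕ) (F : EuclideanSpace ℝ (Fin d) → ℝ) (hF : Differentiable ℝ F)
    (s : ℝ) (hs : 0 < s) (hkm1 hk hk1 : EuclideanSpace ℝ (Fin d))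
    (hmin : ∀ z : EuclideanSpace ℝ (Fin d),
      (1 / s) * ‖hk1 - hk‖ ^ 2 - (1 / (4 * s)) * ‖hk1 - hkm1‖ ^ 2 + F hk1 ≤
      (1 / s) * ‖z - hk‖ ^ 2 - (1 / (4 * s)) * ‖z - hkm1‖ ^ 2 + F z) :
    F hk1 + (1 / (4 * s)) * ‖hk1 - hk‖ ^ 2 ≤ F hk + (1 / (4 * s)) * ‖hk - hkm1‖ ^ 2 := by
  have h1 := hmin hk
  have htri : ‖hk1 - hkm1‖ ≤ ‖hk1 - hk‖ + ‖hk - hkm1‖ := norm_sub_le_norm_sub_add_norm_sub _ _ _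
  have hnn : (0:ℝ) ≤ ‖hk1 - hkm1‖ := norm_nonneg _
  have h2 : ‖hk1 - hkm1‖ ^ 2 ≤ 2 * ‖hk1 - hk‖ ^ 2 + 2 * ‖hk - hkm1‖ ^ 2 := by
    nlinarith [norm_nonneg (hk1 - hk), norm_nonneg (hk - hkm1), sq_nonneg (‖hk1 - hk‖ - ‖hk - hkm1‖)]
  have hsk : ‖hk - hk‖ = 0 := by simp
  rw [hsk] at h1
  have h4s : (0:ℝ) < 1 / (4 * s) := by positivity
  have e1 : 1 / s = 4 * (1 / (4 * s)) := by field_simp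
  have h3 := mul_le_mul_of_nonneg_left h2 (le_of_lt h4s)
  rw [e1] at h1
  nlinarith [mul_nonneg h4s.le (sq_nonneg ‖hk1 - hk‖), mul_nonneg h4s.le (sq_nonneg ‖hk - hkm1‖)]
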